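/- Let A be a unital C*-algebra, let n be a positive integer, let β : ℤ/n → Aut(A) be an action, and suppose there exist pairwise orthogonal projections e₀, …, e_{n−1} in A summing to 1 such that ‖β_k(e_j) − e_{j+k}‖ < ε/n for all j, k ∈ ℤ/n (indices mod n) and ‖e_j a − a e_j‖ < ε/n for all a in a finite set F and all j. Then the unitary u = Σ_{j=0}^{n−1} e^{−2πij/n} e_j satisfies ‖β_k(u) − e^{2πik/n} u‖ < ε for all k ∈ ℤ/n and ‖ub − bu‖ < ε for all b ∈ F. -/

import Mathlib

open Complex

private lemma coef_norm (n : ℕ) [NeZero n] (v : ℕ) :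
    ‖Complex.exp (-(2 * Real.pi * Complex.I * (v : ℕ) / n))‖ = 1 := by
  have h : -(2 * Real.pi * Complex.I * (v : ℕ) / n)
      = ((-(2 * Real.pi * v / n) : ℝ) : ℂ) * Complex.I := by
    push_cast; ring
  rw [h, Complex.norm_exp_ofReal_mul_I]

private lemma coef_key (n : ℕ) [NeZero n] (j k : ZMod n) :
    Complex.exp (-(2 * Real.pi * Complex.I * (j.val : ℕ) / n)) =
    Complex.exp (2 * Real.pi * Complex.I * (k.val : ℕ) / n) *
      Complex.exp (-(2 * Real.pi * Complex.I * ((j + k).val : ℕ) / n)) := by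
  rw [← Complex.exp_add, Complex.exp_eq_exp_iff_exists_int]
  have hdvd : (n : ℤ) ∣ ((j.val : ℤ) + k.val - ((j + k).val : ℤ)) := by
    rw [← ZMod.intCast_zmod_eq_zero_iff_dvd]
    push_cast
    rw [ZMod.natCast_val, ZMod.natCast_val, ZMod.natCast_val,
      ZMod.cast_id, ZMod.cast_id, ZMod.cast_id]
    ring
  obtain ⟨t, ht⟩ := hdvd
  refine ⟨-t, ?_⟩
  have hn : (n : ℂ) ≠ 0 := by exact_mod_cast (NeZero.ne n)
  have htC : ((j.val : ℕ) : ℂ) + ((k.val : ℕ) : ℂ) - (((j + k).val : ℕ) : ℂ)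
      = (n : ℂ) * (t : ℂ) := by
    have h2 := congrArg (fun z : ℤ => (z : ℂ)) ht
    simpa using h2
  simp only [ZMod.natCast_val] at htC
  field_simp
  simp only [ZMod.natCast_val]
  push_cast
  linear_combination (-1 : ℂ) * htC

private lemma sum_norm_lt {A : Type*} [CStarAlgebra A] (n : ℕ) [NeZero n] (ε : ℝ)
    (x : ZMod n → A) (hx : ∀ j, ‖x j‖ < ε / n) :
    ‖∑ j : ZMod n, x j‖ < ε := by
  calc ‖∑ j : ZMod n, x j‖ ≤ ∑ j : ZMod n, ‖x j‖ := norm_sum_le _ _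
    _ < ∑ _j : ZMod n, (ε / n) :=
      Finset.sum_lt_sum_of_nonempty (Finset.univ_nonempty) (fun j _ => hx j)
    _ = ε := by
      rw [Finset.sum_const, Finset.card_univ, ZMod.card, nsmul_eq_mul]
      have hn : (n : ℝ) ≠ 0 := by exact_mod_cast (NeZero.ne n)
      rw [mul_comm]
      exact div_mul_cancel₀ ε hn

theorem stmt_7 {A : Type*} [CStarAlgebra A] (n : ℕ) [NeZero n]
    (β : ZMod n → A ≃⋆ₐ[ℂ] A)
    (hone : ∀ a : A, β 0 a = a)
    (hadd : ∀ j k : ZMod n, ∀ a : A, β (j + k) a = β j (β k a))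
    (e : ZMod n → A) (ε : ℝ) (F : Finset A)
    (hsa : ∀ j, IsSelfAdjoint (e j)) (hidem : ∀ j, IsIdempotentElem (e j))
    (horth : ∀ j k, j ≠ k → e j * e k = 0) (hsum : ∑ j, e j = 1)
    (hβ : ∀ j k : ZMod n, ‖β k (e j) - e (j + k)‖ < ε / n)
    (hcomm : ∀ j : ZMod n, ∀ a ∈ F, ‖e j * a - a * e j‖ < ε / n) :
    let u : A := ∑ j : ZMod n,
      Complex.exp (-(2 * Real.pi * Complex.I * (j.val : ℕ) / n)) • e j
    (∀ k : ZMod n,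
        ‖β k u - Complex.exp (2 * Real.pi * Complex.I * (k.val : ℕ) / n) • u‖ < ε) ∧
    ∀ b ∈ F, ‖u * b - b * u‖ < ε := by
  intro u
  set c : ZMod n → ℂ :=
    fun j => Complex.exp (-(2 * Real.pi * Complex.I * (j.val : ℕ) / n)) with hc
  constructor
  · intro k
    set ζ : ℂ := Complex.exp (2 * Real.pi * Complex.I * (k.val : ℕ) / n) with hζ
    have h1 : β k u = ∑ j : ZMod n, c j • β k (e j) := by
      simp only [u, map_sum, map_smul]
      rfl
    have h2 : ζ • u = ∑ j : ZMod n, c j • e (j + k) := by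
      rw [show ζ • u = ∑ j : ZMod n, (ζ * c j) • e j by
        simp only [u, Finset.smul_sum, smul_smul]; rfl]
      refine Fintype.sum_equiv (Equiv.subRight k) _ _ (fun x => ?_)
      simp only [Equiv.subRight_apply, sub_add_cancel]
      have hx := coef_key n (x - k) k
      rw [sub_add_cancel] at hx
      rw [show c (x - k) = ζ * c x from hx]
    have h3 : β k u - ζ • u = ∑ j : ZMod n, c j • (β k (e j) - e (j + k)) := by
      rw [h1, h2, ← Finset.sum_sub_distrib]
      simp [smul_sub]
    rw [h3]
    refine sum_norm_lt n ε _ (fun j => ?_)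
    rw [norm_smul, coef_norm n j.val, one_mul]
    exact hβ j k
  · intro b hb
    have h4 : u * b - b * u = ∑ j : ZMod n, c j • (e j * b - b * e j) := by
      simp only [u, Finset.sum_mul, Finset.mul_sum, ← Finset.sum_sub_distrib,
        smul_mul_assoc, mul_smul_comm, smul_sub]
      rfl
    rw [h4]
    refine sum_norm_lt n ε _ (fun j => ?_)
    rw [norm_smul, coef_norm n j.val, one_mul]
    exact hcomm j b hb
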